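/- arXiv:1804.00068 — 3 statements merged into one kernel-verified Lean document; each statement's English description precedes it below -/
import Mathlib

section
/- Given finite signed sets S_0, S_1, …, S_{k+1} where S_0 and S_{k+1} contain only positive elements, and sign-reversing involutions φ_i on the signed difference S_i − S_{i+1} for each 0 ≤ i ≤ k, there exists a bijection between S_0 and S_{k+1}. -/
lemma invCardEq {α : Type*} [Fintype α] (f : α → Bool) (φ : α → α)
    (hinv : ∀ x, φ (φ x) = x) (hs : ∀ x, f (φ x) = !f x) :
    Fintype.card {x // f x = true} = Fintype.card {x // f x = false} := by
  apply Fintype.card_congr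
  exact { toFun := fun x => ⟨φ x, by simp [hs, x.2]⟩
          invFun := fun x => ⟨φ x, by simp [hs, x.2]⟩
          left_inv := fun x => Subtype.ext (hinv x)
          right_inv := fun x => Subtype.ext (hinv x) }



/-- The sign function on the signed difference `S i − S (i+1)`: elements of `S i`
keep their sign, elements of `S (i+1)` have their sign flipped. -/
def diffSign {k : ℕ} (S : Fin (k + 2) → Type*) (ε : ∀ i, S i → Bool) (i : Fin (k + 1)) :
    S i.castSucc ⊕ S i.succ → Bool :=
  Sum.elim (ε i.castSucc) (fun y => !(ε i.succ y))

/-- **Involution Principle (Garsia–Milne).** Given finite signed sets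
`S 0, S 1, …, S (k+1)` (sign `true` = positive) where `S 0` and `S (k+1)` contain only
positive elements, and for each `0 ≤ i ≤ k` a sign-reversing involution `φ i` on the
signed difference `S i − S (i+1)`, there is a bijection between `S 0` and `S (k+1)`. -/
theorem involution_principle {k : ℕ} (S : Fin (k + 2) → Type*) [∀ i, Fintype (S i)]
    (ε : ∀ i, S i → Bool)
    (h0 : ∀ x : S 0, ε 0 x = true)
    (hlast : ∀ x : S (Fin.last (k + 1)), ε (Fin.last (k + 1)) x = true)
    (φ : ∀ i : Fin (k + 1), S i.castSucc ⊕ S i.succ → S i.castSucc ⊕ S i.succ)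
    (hinv : ∀ i x, φ i (φ i x) = x)
    (hsign : ∀ i x, diffSign S ε i (φ i x) = !(diffSign S ε i x)) :
    Nonempty (S 0 ≃ S (Fin.last (k + 1))) := by
  set A : Fin (k+2) → ℕ := fun j => Fintype.card {x : S j // ε j x = true} with hA
  set B : Fin (k+2) → ℕ := fun j => Fintype.card {x : S j // ε j x = false} with hB
  have key : ∀ i : Fin (k+1),
      (A i.castSucc : ℤ) - B i.castSucc = A i.succ - B i.succ := by
    intro i
    have h := invCardEq (diffSign S ε i) (φ i) (hinv i) (hsign i)
    have ht : Fintype.card {x // diffSign S ε i x = true} = A i.castSucc + B i.succ := by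
      rw [Fintype.card_congr ((Equiv.subtypeSum (p := fun x => diffSign S ε i x = true)).trans
        (Equiv.sumCongr
          (Equiv.subtypeEquivRight (q := fun a => ε i.castSucc a = true)
            (fun a => by simp [diffSign]))
          (Equiv.subtypeEquivRight (q := fun a => ε i.succ a = false)
            (fun a => by simp [diffSign]))))]
      exact Fintype.card_sum
    have hf : Fintype.card {x // diffSign S ε i x = false} = B i.castSucc + A i.succ := by
      rw [Fintype.card_congr ((Equiv.subtypeSum (p := fun x => diffSign S ε i x = false)).trans
        (Equiv.sumCongr
          (Equiv.subtypeEquivRight (q := fun a => ε i.castSucc a = false)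
            (fun a => by simp [diffSign]))
          (Equiv.subtypeEquivRight (q := fun a => ε i.succ a = true)
            (fun a => by simp [diffSign]))))]
      exact Fintype.card_sum
    rw [ht, hf] at h
    omega
  have const : ∀ j : Fin (k+2), (A j : ℤ) - B j = (A 0 : ℤ) - B 0 := by
    intro j
    induction j using Fin.induction with
    | zero => rfl
    | succ i ih => rw [← key i]; exact ih
  have hB0 : B 0 = 0 := by
    have : IsEmpty {x : S 0 // ε 0 x = false} :=
      ⟨fun x => by have := h0 x.1; rw [x.2] at this; exact Bool.noConfusion this⟩
    exact Fintype.card_eq_zero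
  have hA0 : A 0 = Fintype.card (S 0) :=
    Fintype.card_congr (Equiv.subtypeUnivEquiv h0)
  have hBl : B (Fin.last (k+1)) = 0 := by
    have : IsEmpty {x : S (Fin.last (k+1)) // ε (Fin.last (k+1)) x = false} :=
      ⟨fun x => by have := hlast x.1; rw [x.2] at this; exact Bool.noConfusion this⟩
    exact Fintype.card_eq_zero
  have hAl : A (Fin.last (k+1)) = Fintype.card (S (Fin.last (k+1))) :=
    Fintype.card_congr (Equiv.subtypeUnivEquiv hlast)
  have := const (Fin.last (k+1))
  rw [hB0, hA0, hBl, hAl] at this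
  exact Fintype.card_eq.mp (by omega)
end

section
/- Let A be the Laplacian matrix of a weighted complete directed graph on nodes {0,…,n}, i.e., A_{ij} = −a_{ij} for i ≠ j and A_{ii} = Σ_{k≠i} a_{ik}. Then det(A_{0,0}), the determinant of A with row and column 0 removed, equals the sum over all spanning trees T rooted at node 0 (every non-root node has exactly one out-edge and a directed path to 0) of the product of the weights a_{ij} of the edges of T. -/
open scoped Classical

/-- `f` encodes a directed rooted forest with root set `U`. -/
def IsForest {V : Type*} (U : Set V) (f : V → V) : Prop :=
  (∀ i ∈ U, f i = i) ∧ ∀ i, ∃ k, f^[k] i ∈ U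

/-- The Laplacian of the weighted complete directed graph with edge weights `a`:
`A i j = -a i j` off the diagonal and `A i i = ∑_{k ≠ i} a i k`. -/
noncomputable def laplacian {m : ℕ} {R : Type*} [CommRing R]
    (a : Fin m → Fin m → R) : Matrix (Fin m) (Fin m) R :=
  fun i j => if i = j then ∑ k ∈ Finset.univ.filter (fun k => k ≠ i), a i k else - a i j

namespace MTT
variable {R : Type*} [CommRing R] {n : ℕ}

/-- Extend `r : Fin n → Fin (n+1)` to a function fixing `0`. -/
def ext (r : Fin n → Fin (n + 1)) : Fin (n + 1) → Fin (n + 1) :=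
  fun k => Fin.cases 0 r k

@[simp] lemma ext_zero (r : Fin n → Fin (n + 1)) : ext r 0 = 0 := rfl
@[simp] lemma ext_succ (r : Fin n → Fin (n + 1)) (i : Fin n) : ext r i.succ = r i := rfl

noncomputable def Nmat (R : Type*) [CommRing R] {n : ℕ} (F : Fin (n + 1) → Fin (n + 1)) :
    Matrix (Fin n) (Fin n) R :=
  fun i j => (if i = j then 1 else 0) - (if F i.succ = j.succ then 1 else 0)

theorem det_Nmat_forest (F : Fin (n + 1) → Fin (n + 1))
    (hne : ∀ i : Fin n, F i.succ ≠ i.succ) (hF : IsForest {0} F) :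
    (Nmat R F).det = 1 := by
  rw [Matrix.det_apply]
  rw [Finset.sum_eq_single (1 : Equiv.Perm (Fin n))]
  · simp [Nmat, hne]
  · intro σ _ hσ
    have hprod : (∏ i, Nmat R F (σ i) i) = 0 := by
      by_cases hA : ∃ i : Fin n, σ i ≠ i ∧ F (σ i).succ ≠ i.succ
      · obtain ⟨i, hi1, hi2⟩ := hA
        refine Finset.prod_eq_zero (Finset.mem_univ i) ?_
        simp [Nmat, hi1, hi2]
      · push_neg at hA
        -- hA : ∀ i, σ i ≠ i → F (σ i).succ = i.succ
        exfalso
        have hex : ∃ i, σ i ≠ i := by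
          by_contra h
          push_neg at h
          exact hσ (Equiv.ext h)
        obtain ⟨i₀, hi₀⟩ := hex
        have nonfix : ∀ k, σ (σ.symm^[k] i₀) ≠ σ.symm^[k] i₀ := by
          intro k
          induction k with
          | zero => simpa using hi₀
          | succ k ih =>
            intro h
            rw [Function.iterate_succ_apply'] at h
            set z := σ.symm^[k] i₀ with hz
            have h1 : σ (σ.symm z) = z := σ.apply_symm_apply z
            have h2 : z = σ.symm z := h1.symm.trans h
            exact ih (((congrArg σ h2).trans h).trans h2.symm)
        have claim : ∀ k, F^[k] ((σ i₀).succ) = (σ (σ.symm^[k] i₀)).succ := by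
          intro k
          induction k with
          | zero => rfl
          | succ k ih =>
            rw [Function.iterate_succ_apply', ih]
            rw [Function.iterate_succ_apply']
            rw [hA _ (nonfix k), Equiv.apply_symm_apply]
        obtain ⟨k, hk⟩ := hF.2 ((σ i₀).succ)
        rw [Set.mem_singleton_iff, claim k] at hk
        exact Fin.succ_ne_zero _ hk
    rw [hprod, smul_zero]
  · simp

theorem det_Nmat_not_forest (F : Fin (n + 1) → Fin (n + 1)) (h0 : F 0 = 0)
    (hF : ¬ IsForest {0} F) :
    (Nmat R F).det = 0 := by
  -- find a point never reaching 0
  have hex : ∃ i, ∀ k, F^[k] i ≠ 0 := by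
    by_contra h
    push_neg at h
    refine hF ⟨by simp [h0], fun i => ?_⟩
    obtain ⟨k, hk⟩ := h i
    exact ⟨k, by simp [hk]⟩
  obtain ⟨i₀, hi₀⟩ := hex
  -- find a periodic point on the orbit
  obtain ⟨k₁, k₂, hne, heq⟩ : ∃ k₁ k₂ : ℕ, k₁ ≠ k₂ ∧ F^[k₁] i₀ = F^[k₂] i₀ :=
    Finite.exists_ne_map_eq_of_infinite (fun k : ℕ => F^[k] i₀)
  wlog hlt : k₁ < k₂ generalizing k₁ k₂
  · exact this k₂ k₁ hne.symm heq.symm (by omega)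
  set j := F^[k₁] i₀ with hj
  set p := k₂ - k₁ with hp
  have hp0 : 0 < p := by omega
  have hper : F^[p] j = j := by
    show F^[p] (F^[k₁] i₀) = j
    rw [← Function.iterate_add_apply, show p + k₁ = k₂ by omega, ← heq]
  have hj0 : ∀ k, F^[k] j ≠ 0 := by
    intro k
    rw [hj, ← Function.iterate_add_apply]
    exact hi₀ _
  set C : Finset (Fin (n + 1)) := Finset.univ.filter (fun x => ∃ k, F^[k] j = x) with hC
  have hmemC : ∀ x, x ∈ C ↔ ∃ k, F^[k] j = x := by intro x; simp [hC]
  have hC0 : ∀ x ∈ C, x ≠ 0 := by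
    intro x hx
    obtain ⟨k, hk⟩ := (hmemC x).1 hx
    exact hk ▸ hj0 k
  have hmaps : ∀ x ∈ C, F x ∈ C := by
    intro x hx
    obtain ⟨k, hk⟩ := (hmemC x).1 hx
    exact (hmemC _).2 ⟨k + 1, by rw [Function.iterate_succ_apply', hk]⟩
  have himg : C.image F = C := by
    apply Finset.Subset.antisymm
    · intro y hy
      obtain ⟨x, hx, rfl⟩ := Finset.mem_image.1 hy
      exact hmaps x hx
    · intro x hx
      obtain ⟨k, hk⟩ := (hmemC x).1 hx
      refine Finset.mem_image.2 ⟨F^[k + p - 1] j, (hmemC _).2 ⟨k + p - 1, rfl⟩, ?_⟩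
      rw [← Function.iterate_succ_apply' F (k + p - 1) j,
        show (k + p - 1).succ = k + p by omega, Function.iterate_add_apply, hper, hk]
  have hinj : ∀ x ∈ C, ∀ y ∈ C, F x = F y → x = y :=
    Finset.injOn_of_card_image_eq (by rw [himg])
  set C' : Finset (Fin n) := Finset.univ.filter (fun i => i.succ ∈ C) with hC'
  have hmemC' : ∀ i : Fin n, i ∈ C' ↔ i.succ ∈ C := by intro i; simp [hC']
  have himgC' : C'.image Fin.succ = C := by
    apply Finset.Subset.antisymm
    · intro y hy
      obtain ⟨x, hx, rfl⟩ := Finset.mem_image.1 hy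
      exact (hmemC' x).1 hx
    · intro x hx
      refine Finset.mem_image.2 ⟨x.pred (hC0 x hx), (hmemC' _).2 ?_, Fin.succ_pred _ _⟩
      rw [Fin.succ_pred]; exact hx
  -- the rows indexed by C' sum to zero
  have hrow : ∀ jc : Fin n, (∑ i ∈ C', Nmat R F i jc) = 0 := by
    intro jc
    have h1 : (∑ i ∈ C', (if i = jc then (1 : R) else 0)) =
        if jc ∈ C' then 1 else 0 := Finset.sum_ite_eq' C' jc (fun _ => (1 : R))
    have h2 : (∑ i ∈ C', (if F i.succ = jc.succ then (1 : R) else 0)) =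
        if jc.succ ∈ C then 1 else 0 := by
      have e1 : (∑ i ∈ C', (if F i.succ = jc.succ then (1 : R) else 0)) =
          ∑ x ∈ C, (if F x = jc.succ then (1 : R) else 0) := by
        rw [← himgC', Finset.sum_image (fun a _ b _ h => Fin.succ_injective _ h)]
      have e2 : (∑ x ∈ C, (if F x = jc.succ then (1 : R) else 0)) =
          ∑ y ∈ C.image F, (if y = jc.succ then (1 : R) else 0) := by
        rw [Finset.sum_image hinj]
      rw [e1, e2, himg, Finset.sum_ite_eq' C jc.succ (fun _ => (1 : R))]
    simp only [Nmat, Finset.sum_sub_distrib, h1, h2]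
    by_cases h : jc.succ ∈ C
    · rw [if_pos h, if_pos ((hmemC' jc).2 h), sub_self]
    · rw [if_neg h, if_neg (fun hh => h ((hmemC' jc).1 hh)), sub_self]
  -- conclude det = 0
  have hjC : j ∈ C := (hmemC j).2 ⟨0, rfl⟩
  have hi₀' : j.pred (hC0 j hjC) ∈ C' := (hmemC' _).2 (by rw [Fin.succ_pred]; exact hjC)
  set i₁ := j.pred (hC0 j hjC) with hi₁
  have hsum := Matrix.det_updateRow_sum (Nmat R F) i₁ (fun k => if k ∈ C' then 1 else 0)
  rw [if_pos hi₀', one_smul] at hsum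
  rw [← hsum]
  have hzero : (∑ k, (if k ∈ C' then (1 : R) else 0) • Nmat R F k) = 0 := by
    funext jc
    simp only [Finset.sum_apply, Pi.smul_apply, smul_eq_mul, ite_mul, one_mul, zero_mul,
      Pi.zero_apply]
    rw [Finset.sum_ite_mem, Finset.univ_inter]
    exact hrow jc
  rw [hzero]
  exact Matrix.det_eq_zero_of_row_eq_zero i₁ (fun jc => by simp [Matrix.updateRow_self])
theorem prod_filter_ne_zero (g : Fin (n + 1) → R) :
    (∏ i ∈ Finset.univ.filter (fun i => i ≠ 0), g i) = ∏ i : Fin n, g i.succ := by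
  rw [Finset.prod_filter, Fin.prod_univ_succ]
  simp [Fin.succ_ne_zero]

end MTT

open MTT in
/-- **Matrix Tree Theorem.** For the Laplacian `A` of the weighted complete directed graph
on nodes `{0, …, n}`, the determinant of `A` with row and column `0` removed equals the sum,
over all spanning trees rooted at `0` (each node `i ≠ 0` has exactly one out-edge
`i → f i` and a directed path to `0`), of the product of the weights of the tree's edges. -/
theorem matrix_tree_theorem {R : Type*} [CommRing R] {n : ℕ}
    (a : Fin (n + 1) → Fin (n + 1) → R) :
    ((laplacian a).submatrix (Fin.succAbove 0) (Fin.succAbove 0)).det =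
      ∑ f ∈ Finset.univ.filter (fun f : Fin (n + 1) → Fin (n + 1) => IsForest {0} f),
        ∏ i ∈ Finset.univ.filter (fun i => i ≠ 0), a i (f i) := by
  set A : Fin n → Finset (Fin (n + 1)) :=
    fun i => Finset.univ.filter (fun k => k ≠ i.succ) with hA
  have hmemA : ∀ (i : Fin n) (k : Fin (n + 1)), k ∈ A i ↔ k ≠ i.succ := by
    intro i k; simp [hA]
  set v : Fin n → Fin (n + 1) → (Fin n → R) :=
    fun i k => fun j => (if i = j then 1 else 0) - (if k = j.succ then 1 else 0) with hv
  have hrows : ((laplacian a).submatrix (Fin.succAbove 0) (Fin.succAbove 0)) =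
      fun i => ∑ k ∈ A i, a i.succ k • v i k := by
    funext i jc
    have hpt : (∑ k ∈ A i, a i.succ k • v i k) jc
        = ∑ k ∈ A i, a i.succ k * v i k jc := by
      rw [Finset.sum_apply]; rfl
    show (laplacian a) (Fin.succAbove 0 i) (Fin.succAbove 0 jc) = _
    rw [Fin.succAbove_zero, hpt]
    by_cases h : i = jc
    · subst h
      have : (laplacian a) i.succ i.succ
          = ∑ k ∈ Finset.univ.filter (fun k => k ≠ i.succ), a i.succ k := by
        simp [laplacian]
      rw [this]
      refine Finset.sum_congr rfl (fun k hk => ?_)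
      have hk' : k ≠ i.succ := (hmemA i k).1 hk
      simp [hv, hk']
    · have hss : i.succ ≠ jc.succ := fun hh => h (Fin.succ_injective _ hh)
      have : (laplacian a) i.succ jc.succ = - a i.succ jc.succ := by
        simp [laplacian, hss]
      rw [this]
      have : ∀ k ∈ A i, a i.succ k * v i k jc
          = -(if k = jc.succ then a i.succ k else 0) := by
        intro k hk
        simp [hv, h, mul_ite, mul_comm]
      rw [Finset.sum_congr rfl this, Finset.sum_neg_distrib,
        Finset.sum_ite_eq' (A i) jc.succ (fun k => a i.succ k),
        if_pos ((hmemA i jc.succ).2 (fun hh => h (Fin.succ_injective _ hh).symm))]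
  rw [hrows]
  have hdet0 : Matrix.det (fun i => ∑ k ∈ A i, a i.succ k • v i k)
      = ∑ r ∈ Fintype.piFinset A,
          Matrix.detRowAlternating (fun i => a i.succ (r i) • v i (r i)) := by
    exact (Matrix.detRowAlternating :
      (Fin n → R) [⋀^Fin n]→ₗ[R] R).toMultilinearMap.map_sum_finset
      (fun i k => a i.succ k • v i k) A
  rw [hdet0]
  have hterm : ∀ r ∈ Fintype.piFinset A,
      Matrix.detRowAlternating (fun i => a i.succ (r i) • v i (r i))
        = (∏ i, a i.succ (r i)) *
            (if IsForest {0} (ext r) then (1 : R) else 0) := by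
    intro r hr
    have h1 : Matrix.detRowAlternating (fun i => a i.succ (r i) • v i (r i))
        = (∏ i, a i.succ (r i)) • Matrix.detRowAlternating (fun i => v i (r i)) := by
      exact (Matrix.detRowAlternating :
        (Fin n → R) [⋀^Fin n]→ₗ[R] R).toMultilinearMap.map_smul_univ
        (fun i => a i.succ (r i)) (fun i => v i (r i))
    have h2 : (fun i => v i (r i)) = Nmat R (ext r) := by
      funext i j
      simp [hv, Nmat]
      congr
    have h3 : Matrix.det (Nmat R (ext r))
        = if IsForest {0} (ext r) then (1 : R) else 0 := by
      by_cases hf : IsForest {0} (ext r)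
      · rw [if_pos hf]
        refine det_Nmat_forest _ (fun i => ?_) hf
        rw [ext_succ]
        exact (hmemA i (r i)).1 (Fintype.mem_piFinset.1 hr i)
      · rw [if_neg hf]
        exact det_Nmat_not_forest _ (ext_zero r) hf
    rw [h1, h2]
    show (∏ i, a i.succ (r i)) • Matrix.det (Nmat R (ext r)) = _
    rw [h3, smul_eq_mul]
  rw [Finset.sum_congr rfl hterm]
  have hfilter : (∑ r ∈ Fintype.piFinset A,
        (∏ i, a i.succ (r i)) * (if IsForest {0} (ext r) then (1 : R) else 0))
      = ∑ r ∈ (Fintype.piFinset A).filter (fun r => IsForest {0} (ext r)),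
          ∏ i, a i.succ (r i) := by
    rw [Finset.sum_filter]
    refine Finset.sum_congr rfl (fun r _ => ?_)
    by_cases hf : IsForest {0} (ext r) <;> simp [hf]
  rw [hfilter]
  refine Finset.sum_bij' (fun r _ => ext r) (fun f _ => fun i => f i.succ)
    ?_ ?_ ?_ ?_ ?_
  · intro r hr
    simp only [Finset.mem_filter, Finset.mem_univ, true_and]
    exact (Finset.mem_filter.1 hr).2
  · intro f hf
    have hff : IsForest {0} f := (Finset.mem_filter.1 hf).2
    have hf0 : f 0 = 0 := hff.1 0 rfl
    refine Finset.mem_filter.2 ⟨Fintype.mem_piFinset.2 (fun i => ?_), ?_⟩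
    · refine (hmemA i (f i.succ)).2 (fun hh => ?_)
      have hiter : ∀ k, f^[k] i.succ = i.succ := by
        intro k
        induction k with
        | zero => rfl
        | succ k ih => rw [Function.iterate_succ_apply', ih, hh]
      obtain ⟨k, hk⟩ := hff.2 i.succ
      rw [Set.mem_singleton_iff, hiter k] at hk
      exact Fin.succ_ne_zero _ hk
    · have : ext (fun i => f i.succ) = f := by
        funext k
        cases k using Fin.cases with
        | zero => rw [ext_zero, hf0]
        | succ i => rw [ext_succ]
      rw [this]
      exact hff
  · intro r hr
    funext i
    show ext r i.succ = r i
    rw [ext_succ]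
  · intro f hf
    have hff : IsForest {0} f := (Finset.mem_filter.1 hf).2
    funext k
    show ext (fun i => f i.succ) k = f k
    cases k using Fin.cases with
    | zero => rw [ext_zero, hff.1 0 rfl]
    | succ i => rw [ext_succ]
  · intro r hr
    rw [prod_filter_ne_zero]
    refine Finset.prod_congr rfl (fun i _ => ?_)
    show a i.succ (r i) = a i.succ (ext r i.succ)
    rw [ext_succ]
end

section
/- Let A be the Laplacian of a weighted complete directed graph on {0,…,n} and let U ⊆ {0,…,n}. Then det(A_{U,U}) equals the sum over all spanning forests rooted exactly at the nodes of U (each node not in U has exactly one out-edge, no directed cycles) of the product of the edge weights of the forest. -/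
open scoped Classical

namespace AMTT

open Finset Equiv Equiv.Perm

variable {V : Type*} [Fintype V] [DecidableEq V] {U : Finset V}

/-- Extend a function on the complement of `U` to `V`, fixing `U`. -/
noncomputable def extU (U : Finset V) (p : {i : V // i ∉ U} → V) : V → V :=
  fun x => if h : x ∈ U then x else p ⟨x, h⟩

lemma extU_mem {p : {i : V // i ∉ U} → V} {x : V} (h : x ∈ U) : extU U p x = x := dif_pos h

lemma extU_not_mem {p : {i : V // i ∉ U} → V} {x : V} (h : x ∉ U) :
    extU U p x = p ⟨x, h⟩ := dif_neg h

lemma extU_coe {p : {i : V // i ∉ U} → V} (i : {i : V // i ∉ U}) : extU U p ↑i = p i := by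
  rw [extU_not_mem i.2]

lemma extU_iterate_mem {p : {i : V // i ∉ U} → V} {x : V} (h : x ∈ U) (k : ℕ) :
    (extU U p)^[k] x = x :=
  Function.IsFixedPt.iterate (extU_mem h) k

/-- The sign-weight of a permutation. -/
noncomputable def wgt (R : Type*) [CommRing R] (σ : Perm {i : V // i ∉ U}) : R :=
  ((Perm.sign σ : ℤ) : R) * (-1) ^ σ.support.card

/-- Permutations compatible with `p`. -/
noncomputable def Sf (U : Finset V) (p : {i : V // i ∉ U} → V) :
    Finset (Perm {i : V // i ∉ U}) :=
  univ.filter (fun σ => ∀ i, σ i ≠ i → p i = ↑(σ i))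

lemma mem_Sf {p : {i : V // i ∉ U} → V} {σ : Perm {i : V // i ∉ U}} :
    σ ∈ Sf U p ↔ ∀ i, σ i ≠ i → p i = ↑(σ i) := by
  simp [Sf]

lemma sum_wgt_good {R : Type*} [CommRing R] {p : {i : V // i ∉ U} → V}
    (hg : ∀ x : V, ∃ k, (extU U p)^[k] x ∈ U) :
    ∑ σ ∈ Sf U p, wgt R σ = 1 := by
  have h1 : Sf U p = {1} := by
    apply Finset.eq_singleton_iff_unique_mem.mpr
    constructor
    · simp [mem_Sf]
    · intro σ hσ
      by_contra hne
      obtain ⟨i, hi⟩ : ∃ i, σ i ≠ i := by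
        by_contra h; push_neg at h; exact hne (Equiv.ext h)
      have hS := mem_Sf.mp hσ
      have key : ∀ k, ∃ j, σ j ≠ j ∧ (extU U p)^[k] ↑i = ↑j := by
        intro k; induction k with
        | zero => exact ⟨i, hi, rfl⟩
        | succ k ih =>
          obtain ⟨j, hj, hjk⟩ := ih
          refine ⟨σ j, fun h => hj (σ.injective h), ?_⟩
          rw [Function.iterate_succ_apply', hjk, extU_coe, hS j hj]
      obtain ⟨k, hk⟩ := hg ↑i
      obtain ⟨j, _, hj⟩ := key k
      rw [hj] at hk; exact j.2 hk
  rw [h1, Finset.sum_singleton, wgt]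
  simp


open Finset Equiv Equiv.Perm

variable {V : Type*} [Fintype V] [DecidableEq V] {U : Finset V}

/-- The forward orbit of `x0` of length `m`. -/
def OrbF (F : V → V) (x0 : V) (m : ℕ) : Finset V :=
  (Finset.range m).image (fun j => F^[j] x0)

lemma mem_OrbF {F : V → V} {x0 x : V} {m : ℕ} :
    x ∈ OrbF F x0 m ↔ ∃ j < m, F^[j] x0 = x := by
  simp [OrbF]

section Orbit

variable {F : V → V} {x0 : V} {m : ℕ}

lemma OrbF_self (hm : 0 < m) : x0 ∈ OrbF F x0 m :=
  mem_OrbF.mpr ⟨0, hm, rfl⟩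

lemma OrbF_map (hm : 0 < m) (hper : Function.IsPeriodicPt F m x0) {x : V}
    (hx : x ∈ OrbF F x0 m) : F x ∈ OrbF F x0 m := by
  obtain ⟨j, hj, rfl⟩ := mem_OrbF.mp hx
  refine mem_OrbF.mpr ⟨(j + 1) % m, Nat.mod_lt _ hm, ?_⟩
  rw [hper.iterate_mod_apply]; exact Function.iterate_succ_apply' F j x0

lemma OrbF_iterate_map (hm : 0 < m) (hper : Function.IsPeriodicPt F m x0) {x : V}
    (hx : x ∈ OrbF F x0 m) (k : ℕ) : F^[k] x ∈ OrbF F x0 m := by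
  induction k with
  | zero => exact hx
  | succ k ih => rw [Function.iterate_succ_apply']; exact OrbF_map hm hper ih

lemma OrbF_iterate_m (hper : Function.IsPeriodicPt F m x0) {x : V}
    (hx : x ∈ OrbF F x0 m) : F^[m] x = x := by
  obtain ⟨j, hj, rfl⟩ := mem_OrbF.mp hx
  rw [← Function.iterate_add_apply, Nat.add_comm, Function.iterate_add_apply, hper]

end Orbit

section Tau

variable {p : {i : V // i ∉ U} → V} {x0 : V} {m : ℕ}

lemma OrbF_not_memU (horb : ∀ j, (extU U p)^[j] x0 ∉ U) {x : V}
    (hx : x ∈ OrbF (extU U p) x0 m) : x ∉ U := by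
  obtain ⟨j, _, rfl⟩ := mem_OrbF.mp hx
  exact horb j

/-- The cyclic permutation associated to a periodic orbit of `extU U p` avoiding `U`. -/
noncomputable def tau (p : {i : V // i ∉ U} → V) (x0 : V) (m : ℕ) (hm : 0 < m)
    (hper : Function.IsPeriodicPt (extU U p) m x0)
    (horb : ∀ j, (extU U p)^[j] x0 ∉ U) : Perm {i : V // i ∉ U} where
  toFun i := if h : ↑i ∈ OrbF (extU U p) x0 m then
      ⟨extU U p ↑i, OrbF_not_memU horb (OrbF_map hm hper h)⟩ else i
  invFun i := if h : ↑i ∈ OrbF (extU U p) x0 m then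
      ⟨(extU U p)^[m-1] ↑i, OrbF_not_memU horb (OrbF_iterate_map hm hper h (m-1))⟩ else i
  left_inv := by
    intro i
    dsimp only
    by_cases h : ↑i ∈ OrbF (extU U p) x0 m
    · rw [dif_pos h]
      have h2 : extU U p ↑i ∈ OrbF (extU U p) x0 m := OrbF_map hm hper h
      rw [dif_pos h2]
      apply Subtype.ext
      show (extU U p)^[m-1] (extU U p ↑i) = ↑i
      rw [← Function.iterate_succ_apply, Nat.succ_eq_add_one, Nat.sub_add_cancel hm,
        OrbF_iterate_m hper h]
    · rw [dif_neg h, dif_neg h]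
  right_inv := by
    intro i
    dsimp only
    by_cases h : ↑i ∈ OrbF (extU U p) x0 m
    · rw [dif_pos h]
      have h2 : (extU U p)^[m-1] ↑i ∈ OrbF (extU U p) x0 m := OrbF_iterate_map hm hper h _
      rw [dif_pos h2]
      apply Subtype.ext
      show extU U p ((extU U p)^[m-1] ↑i) = ↑i
      have h3 := Function.iterate_succ_apply' (extU U p) (m-1) ↑i
      rw [Nat.succ_eq_add_one, Nat.sub_add_cancel hm] at h3
      rw [← h3, OrbF_iterate_m hper h]
    · rw [dif_neg h, dif_neg h]

variable (hm : 0 < m) (hper : Function.IsPeriodicPt (extU U p) m x0)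
  (horb : ∀ j, (extU U p)^[j] x0 ∉ U)

lemma tau_coe {i : {i : V // i ∉ U}} (h : ↑i ∈ OrbF (extU U p) x0 m) :
    ↑(tau p x0 m hm hper horb i) = extU U p ↑i := by
  simp only [tau, Equiv.coe_fn_mk]
  rw [dif_pos h]

lemma tau_not_mem {i : {i : V // i ∉ U}} (h : ↑i ∉ OrbF (extU U p) x0 m) :
    tau p x0 m hm hper horb i = i := by
  simp only [tau, Equiv.coe_fn_mk]
  rw [dif_neg h]

lemma tau_symm_coe {i : {i : V // i ∉ U}} (h : ↑i ∈ OrbF (extU U p) x0 m) :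
    ↑((tau p x0 m hm hper horb)⁻¹ i) = (extU U p)^[m-1] ↑i := by
  simp only [tau, Equiv.Perm.inv_def, Equiv.coe_fn_symm_mk]
  rw [dif_pos h]

lemma tau_symm_not_mem {i : {i : V // i ∉ U}} (h : ↑i ∉ OrbF (extU U p) x0 m) :
    (tau p x0 m hm hper horb)⁻¹ i = i := by
  simp only [tau, Equiv.Perm.inv_def, Equiv.coe_fn_symm_mk]
  rw [dif_neg h]

lemma tau_ne (hD : ∀ i, p i ≠ ↑i) {i : {i : V // i ∉ U}}
    (h : ↑i ∈ OrbF (extU U p) x0 m) : tau p x0 m hm hper horb i ≠ i := by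
  intro hcon
  have := congrArg (Subtype.val) hcon
  rw [tau_coe hm hper horb h, extU_coe] at this
  exact hD i this

lemma tau_iterate {i : {i : V // i ∉ U}} (h : ↑i ∈ OrbF (extU U p) x0 m) (k : ℕ) :
    ↑((tau p x0 m hm hper horb)^[k] i) = (extU U p)^[k] ↑i := by
  induction k with
  | zero => rfl
  | succ k ih =>
    rw [Function.iterate_succ_apply', Function.iterate_succ_apply',
      tau_coe hm hper horb (by rw [ih]; exact OrbF_iterate_map hm hper h k), ih]

lemma tau_isCycle (hD : ∀ i, p i ≠ ↑i) : (tau p x0 m hm hper horb).IsCycle := by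
  have hx0U : x0 ∉ U := by simpa using horb 0
  have hx0O : x0 ∈ OrbF (extU U p) x0 m := OrbF_self hm
  refine ⟨⟨x0, hx0U⟩, tau_ne hm hper horb hD hx0O, ?_⟩
  intro y hy
  have hyO : ↑y ∈ OrbF (extU U p) x0 m := by
    by_contra h
    exact hy (tau_not_mem hm hper horb h)
  obtain ⟨j, _, hj⟩ := mem_OrbF.mp hyO
  refine ⟨(j : ℤ), ?_⟩
  rw [zpow_natCast, ← Equiv.Perm.iterate_eq_pow]
  apply Subtype.ext
  rw [tau_iterate hm hper horb hx0O j]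
  exact hj

end Tau
section Bad

variable {p : {i : V // i ∉ U} → V} {x0 : V} {m : ℕ}
variable (hm : 0 < m) (hper : Function.IsPeriodicPt (extU U p) m x0)
  (horb : ∀ j, (extU U p)^[j] x0 ∉ U)

lemma sigma_eq_tau {σ : Perm {i : V // i ∉ U}} (hσ : σ ∈ Sf U p)
    {i : {i : V // i ∉ U}} (hiO : ↑i ∈ OrbF (extU U p) x0 m) (hne : σ i ≠ i) :
    σ i = tau p x0 m hm hper horb i := by
  apply Subtype.ext
  rw [tau_coe hm hper horb hiO, extU_coe]
  exact (mem_Sf.mp hσ i hne).symm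

include hm hper horb in
lemma dichotomy (hD : ∀ i, p i ≠ ↑i) {σ : Perm {i : V // i ∉ U}} (hσ : σ ∈ Sf U p) :
    (∀ i : {i : V // i ∉ U}, ↑i ∈ OrbF (extU U p) x0 m → σ i = i) ∨
    (∀ i : {i : V // i ∉ U}, ↑i ∈ OrbF (extU U p) x0 m → σ i ≠ i) := by
  by_cases hall : ∀ i : {i : V // i ∉ U}, ↑i ∈ OrbF (extU U p) x0 m → σ i = i
  · exact Or.inl hall
  · right
    push_neg at hall
    obtain ⟨i0, hi0O, hi0⟩ := hall
    have hstep : ∀ j : ℕ, σ ((tau p x0 m hm hper horb)^[j] i0) ≠ (tau p x0 m hm hper horb)^[j] i0 ∧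
        ↑((tau p x0 m hm hper horb)^[j] i0) ∈ OrbF (extU U p) x0 m := by
      intro j; induction j with
      | zero => exact ⟨hi0, hi0O⟩
      | succ j ih =>
        obtain ⟨h1, h2⟩ := ih
        rw [Function.iterate_succ_apply']
        constructor
        · rw [← sigma_eq_tau hm hper horb hσ h2 h1]
          intro hcon
          exact h1 (σ.injective hcon)
        · rw [tau_coe hm hper horb h2]
          exact OrbF_map hm hper h2
    intro i hiO
    obtain ⟨j, hj⟩ := (tau_isCycle hm hper horb hD).exists_pow_eq
      (tau_ne hm hper horb hD hi0O) (tau_ne hm hper horb hD hiO)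
    rw [← Equiv.Perm.iterate_eq_pow] at hj
    rw [← hj]
    exact (hstep j).1

end Bad

lemma wgt_mul_cycle {R : Type*} [CommRing R] {σ τ : Perm {i : V // i ∉ U}}
    (hc : τ.IsCycle) (hd : Equiv.Perm.Disjoint σ τ) : wgt R (σ * τ) = - wgt R σ := by
  unfold wgt
  rw [map_mul, hd.card_support_mul, hc.sign]
  have h1 : ((-1 : R) ^ τ.support.card) * ((-1 : R) ^ τ.support.card) = 1 := by
    rw [← pow_add]; exact Even.neg_one_pow ⟨τ.support.card, rfl⟩
  push_cast [pow_add]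
  linear_combination (-(((Perm.sign σ : ℤ) : R)) * (-1 : R) ^ σ.support.card) * h1
lemma sum_wgt_bad {R : Type*} [CommRing R] {p : {i : V // i ∉ U} → V}
    (hD : ∀ i, p i ≠ ↑i)
    (hg : ¬ ∀ x : V, ∃ k, (extU U p)^[k] x ∈ U) :
    ∑ σ ∈ Sf U p, wgt R σ = 0 := by
  push_neg at hg
  obtain ⟨x, hx⟩ := hg
  obtain ⟨k, l, hkl, hkleq⟩ : ∃ k l : ℕ, k < l ∧ (extU U p)^[k] x = (extU U p)^[l] x := by
    obtain ⟨k, l, hne, heq⟩ := Finite.exists_ne_map_eq_of_infinite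
      (fun k : ℕ => (extU U p)^[k] x)
    rcases lt_or_gt_of_ne hne with h | h
    · exact ⟨k, l, h, heq⟩
    · exact ⟨l, k, h, heq.symm⟩
  have hper : Function.IsPeriodicPt (extU U p) (l - k) ((extU U p)^[k] x) := by
    show (extU U p)^[l-k] ((extU U p)^[k] x) = (extU U p)^[k] x
    rw [← Function.iterate_add_apply, Nat.sub_add_cancel hkl.le]
    exact hkleq.symm
  have hm : 0 < l - k := Nat.sub_pos_of_lt hkl
  have horb : ∀ j, (extU U p)^[j] ((extU U p)^[k] x) ∉ U := by
    intro j
    rw [← Function.iterate_add_apply]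
    exact hx (j + k)
  set x0 : V := (extU U p)^[k] x with hx0def
  have hx0U : x0 ∉ U := by simpa using horb 0
  set τ : Perm {i : V // i ∉ U} := tau p x0 (l-k) hm hper horb with hτ
  set O : Finset V := OrbF (extU U p) x0 (l-k) with hO
  have hx0O : x0 ∈ O := OrbF_self hm
  set x0W : {i : V // i ∉ U} := ⟨x0, hx0U⟩ with hx0W
  have hcyc : τ.IsCycle := tau_isCycle hm hper horb hD
  have hτne : τ x0W ≠ x0W := tau_ne hm hper horb hD hx0O
  -- case 1 facts
  have key1 : ∀ σ ∈ Sf U p, σ x0W ≠ x0W →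
      (σ * τ⁻¹ ∈ Sf U p ∧ (σ * τ⁻¹) x0W = x0W ∧ wgt R σ + wgt R (σ * τ⁻¹) = 0) := by
    intro σ hσ hne
    have hfull : ∀ i : {i : V // i ∉ U}, ↑i ∈ O → σ i ≠ i := by
      rcases dichotomy hm hper horb hD hσ with h | h
      · exact absurd (h x0W hx0O) hne
      · exact h
    have hτeq : ∀ i : {i : V // i ∉ U}, ↑i ∈ O → σ i = τ i := fun i hi =>
      sigma_eq_tau hm hper horb hσ hi (hfull i hi)
    have hfix : ∀ i : {i : V // i ∉ U}, ↑i ∈ O → (σ * τ⁻¹) i = i := by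
      intro i hi
      have h1 : ↑(τ⁻¹ i) ∈ O := by
        rw [hτ, tau_symm_coe hm hper horb hi]
        exact OrbF_iterate_map hm hper hi _
      show σ (τ⁻¹ i) = i
      rw [hτeq _ h1]
      exact Equiv.apply_symm_apply τ i
    have hout : ∀ i : {i : V // i ∉ U}, ↑i ∉ O → (σ * τ⁻¹) i = σ i := by
      intro i hi
      show σ (τ⁻¹ i) = σ i
      rw [hτ, tau_symm_not_mem hm hper horb hi]
    refine ⟨?_, hfix x0W hx0O, ?_⟩
    · rw [mem_Sf]
      intro i hne2
      by_cases hiO : ↑i ∈ O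
      · exact absurd (hfix i hiO) hne2
      · rw [hout i hiO] at hne2 ⊢
        exact mem_Sf.mp hσ i hne2
    · have hdis : Equiv.Perm.Disjoint (σ * τ⁻¹) τ := by
        intro i
        by_cases hiO : ↑i ∈ O
        · exact Or.inl (hfix i hiO)
        · exact Or.inr (tau_not_mem hm hper horb hiO)
      have hre : wgt R σ = wgt R ((σ * τ⁻¹) * τ) := by rw [inv_mul_cancel_right]
      rw [hre, wgt_mul_cycle hcyc hdis]
      ring
  -- case 2 facts
  have key2 : ∀ σ ∈ Sf U p, σ x0W = x0W →
      (σ * τ ∈ Sf U p ∧ (σ * τ) x0W ≠ x0W ∧ wgt R σ + wgt R (σ * τ) = 0) := by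
    intro σ hσ heq
    have hfix : ∀ i : {i : V // i ∉ U}, ↑i ∈ O → σ i = i := by
      rcases dichotomy hm hper horb hD hσ with h | h
      · exact h
      · exact absurd heq (h x0W hx0O)
    have happ : ∀ i : {i : V // i ∉ U}, ↑i ∈ O → (σ * τ) i = τ i := by
      intro i hi
      show σ (τ i) = τ i
      apply hfix
      rw [hτ, tau_coe hm hper horb hi]
      exact OrbF_map hm hper hi
    have hout : ∀ i : {i : V // i ∉ U}, ↑i ∉ O → (σ * τ) i = σ i := by
      intro i hi
      show σ (τ i) = σ i
      rw [hτ, tau_not_mem hm hper horb hi]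
    refine ⟨?_, ?_, ?_⟩
    · rw [mem_Sf]
      intro i hne2
      by_cases hiO : ↑i ∈ O
      · rw [happ i hiO, hτ, tau_coe hm hper horb hiO, extU_coe]
      · rw [hout i hiO] at hne2 ⊢
        exact mem_Sf.mp hσ i hne2
    · rw [happ x0W hx0O]
      exact hτne
    · have hdis : Equiv.Perm.Disjoint σ τ := by
        intro i
        by_cases hiO : ↑i ∈ O
        · exact Or.inl (hfix i hiO)
        · exact Or.inr (tau_not_mem hm hper horb hiO)
      rw [wgt_mul_cycle hcyc hdis]
      ring
  -- the involution
  apply Finset.sum_involution (fun σ _ => if σ x0W = x0W then σ * τ else σ * τ⁻¹)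
  · intro σ hσ
    by_cases h : σ x0W = x0W
    · rw [if_pos h]; exact (key2 σ hσ h).2.2
    · rw [if_neg h]; exact (key1 σ hσ h).2.2
  · intro σ hσ _
    by_cases h : σ x0W = x0W
    · rw [if_pos h]
      intro hcon
      have : τ = 1 := mul_left_cancel (show σ * τ = σ * 1 by rw [mul_one]; exact hcon)
      exact hτne (by rw [this]; rfl)
    · rw [if_neg h]
      intro hcon
      have hτ1 : τ⁻¹ = 1 := mul_left_cancel (show σ * τ⁻¹ = σ * 1 by rw [mul_one]; exact hcon)
      have : τ = 1 := by rw [← inv_inv τ, hτ1, inv_one]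
      exact hτne (by rw [this]; rfl)
  · intro σ hσ
    by_cases h : σ x0W = x0W
    · rw [if_pos h]; exact (key2 σ hσ h).1
    · rw [if_neg h]; exact (key1 σ hσ h).1
  · intro σ hσ
    by_cases h : σ x0W = x0W
    · rw [if_pos h, if_neg (key2 σ hσ h).2.1, mul_inv_cancel_right]
    · rw [if_neg h, if_pos (key1 σ hσ h).2.1, inv_mul_cancel_right]
lemma det_eq_sum {R : Type*} [CommRing R] (a : V → V → R) (U : Finset V) :
    (Matrix.det (Matrix.of fun i j : {i : V // i ∉ U} =>
      if (i : V) = ↑j then ∑ k ∈ univ.filter (fun k => k ≠ (i : V)), a ↑i k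
      else - a ↑i ↑j)) =
    ∑ p ∈ univ.filter (fun p : {i : V // i ∉ U} → V =>
        ∀ x : V, ∃ k, (extU U p)^[k] x ∈ U), ∏ i : {i : V // i ∉ U}, a (↑i) (p i) := by
  classical
  set W := {i : V // i ∉ U} with hW
  set M : Matrix W W R := Matrix.of fun i j : W =>
      if (i : V) = ↑j then ∑ k ∈ univ.filter (fun k => k ≠ (i : V)), a ↑i k
      else - a ↑i ↑j with hM
  set t : Perm W → W → Finset V := fun σ i =>
    if σ i = i then univ.filter (fun k => k ≠ (i : V)) else {(↑(σ i) : V)} with ht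
  set b : Perm W → W → V → R := fun σ i k => if σ i = i then a ↑i k else -(a ↑i k) with hb
  have hMst : ∀ (σ : Perm W) (i : W), M i (σ i) = ∑ k ∈ t σ i, b σ i k := by
    intro σ i
    by_cases h : σ i = i
    · simp [hM, ht, hb, Matrix.of_apply, h]
    · have hne : (i : V) ≠ ↑(σ i) := fun hc => h (Subtype.ext hc.symm)
      simp only [hM, ht, hb, Matrix.of_apply, if_neg hne, if_neg h, Finset.sum_singleton]
  have hprod : ∀ (σ : Perm W) (p : W → V),
      ∏ i, b σ i (p i) = (-1 : R) ^ σ.support.card * ∏ i : {i : V // i ∉ U}, a (↑i) (p i) := by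
    intro σ p
    have h1 : ∀ i : W, b σ i (p i) = (if σ i = i then (1 : R) else -1) * a ↑i (p i) := by
      intro i
      by_cases h : σ i = i <;> simp [hb, h]
    rw [Finset.prod_congr rfl (fun i _ => h1 i), Finset.prod_mul_distrib]
    congr 1
    rw [Finset.prod_ite, Finset.prod_const_one, one_mul, Finset.prod_const,
      show (Finset.filter (fun i : {i : V // i ∉ U} => ¬ σ i = i) univ) = σ.support from
        by ext x; simp [Equiv.Perm.mem_support]]
  have hpimem : ∀ (σ : Perm W) (p : W → V),
      p ∈ Fintype.piFinset (t σ) ↔ (∀ i, p i ≠ ↑i) ∧ σ ∈ Sf U p := by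
    intro σ p
    rw [Fintype.mem_piFinset]
    constructor
    · intro h
      constructor
      · intro i
        specialize h i
        by_cases hσ : σ i = i
        · rw [ht] at h; simp only [if_pos hσ, Finset.mem_filter] at h; exact h.2
        · rw [ht] at h; simp only [if_neg hσ, Finset.mem_singleton] at h
          rw [h]
          exact fun hc => hσ (Subtype.ext hc)
      · rw [mem_Sf]
        intro i hσ
        specialize h i
        rw [ht] at h; simp only [if_neg hσ, Finset.mem_singleton] at h
        exact h
    · rintro ⟨hD, hS⟩ i
      by_cases hσ : σ i = i
      · rw [ht]; simp only [if_pos hσ, Finset.mem_filter]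
        exact ⟨Finset.mem_univ _, hD i⟩
      · rw [ht]; simp only [if_neg hσ, Finset.mem_singleton]
        exact mem_Sf.mp hS i hσ
  rw [← Matrix.det_transpose, Matrix.det_apply']
  have step1 : ∀ σ : Perm W, ((Equiv.Perm.sign σ : ℤ) : R) * ∏ i, M.transpose (σ i) i =
      ∑ p ∈ Fintype.piFinset (t σ), wgt R σ * ∏ i : {i : V // i ∉ U}, a (↑i) (p i) := by
    intro σ
    have : ∏ i, M.transpose (σ i) i = ∏ i, M i (σ i) := by
      apply Finset.prod_congr rfl
      intro i _
      rfl
    rw [this, Finset.prod_congr rfl (fun i _ => hMst σ i), Finset.prod_univ_sum,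
      Finset.mul_sum]
    apply Finset.sum_congr rfl
    intro p _
    rw [hprod σ p, wgt]
    ring
  rw [Finset.sum_congr rfl (fun σ _ => step1 σ)]
  have step2 : ∀ σ : Perm W, ∑ p ∈ Fintype.piFinset (t σ), wgt R σ * ∏ i : {i : V // i ∉ U}, a (↑i) (p i) =
      ∑ p ∈ (univ : Finset (W → V)),
        if p ∈ Fintype.piFinset (t σ) then wgt R σ * ∏ i : {i : V // i ∉ U}, a (↑i) (p i) else 0 := by
    intro σ
    rw [Finset.sum_ite_mem, Finset.univ_inter]
  rw [Finset.sum_congr rfl (fun σ _ => step2 σ), Finset.sum_comm]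
  have step3 : ∀ p : W → V, (∑ σ : Perm W,
      if p ∈ Fintype.piFinset (t σ) then wgt R σ * ∏ i : {i : V // i ∉ U}, a (↑i) (p i) else 0) =
      (if (∀ x : V, ∃ k, (extU U p)^[k] x ∈ U) then (1 : R) else 0) * ∏ i : {i : V // i ∉ U}, a (↑i) (p i) := by
    intro p
    rw [Finset.sum_congr rfl (fun σ _ => if_congr (hpimem σ p) rfl rfl)]
    by_cases hD : ∀ i, p i ≠ ↑i
    · have h1 : ∀ σ : Perm W, (if ((∀ i, p i ≠ ↑i) ∧ σ ∈ Sf U p) then wgt R σ * ∏ i : {i : V // i ∉ U}, a (↑i) (p i) else 0) =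
          if σ ∈ Sf U p then wgt R σ * ∏ i : {i : V // i ∉ U}, a (↑i) (p i) else 0 := fun σ => if_congr (and_iff_right hD) rfl rfl
      rw [Finset.sum_congr rfl (fun σ _ => h1 σ), ← Finset.sum_filter]
      have : Finset.filter (fun σ : Perm W => σ ∈ Sf U p) univ = Sf U p := by
        ext σ; simp
      rw [this, ← Finset.sum_mul]
      congr 1
      by_cases hGood : ∀ x : V, ∃ k, (extU U p)^[k] x ∈ U
      · rw [sum_wgt_good hGood, if_pos hGood]
      · rw [sum_wgt_bad hD hGood, if_neg hGood]
    · have h1 : ∀ σ : Perm W, (if ((∀ i, p i ≠ ↑i) ∧ σ ∈ Sf U p) then wgt R σ * ∏ i : {i : V // i ∉ U}, a (↑i) (p i) else 0) = 0 :=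
        fun σ => if_neg (fun hc => hD hc.1)
      rw [Finset.sum_congr rfl (fun σ _ => h1 σ), Finset.sum_const_zero]
      have hGood : ¬ (∀ x : V, ∃ k, (extU U p)^[k] x ∈ U) := by
        intro hGood
        apply hD
        intro i hcon
        have hfix : Function.IsFixedPt (extU U p) ↑i := by
          show extU U p ↑i = ↑i
          rw [extU_coe, hcon]
        obtain ⟨k, hk⟩ := hGood ↑i
        rw [hfix.iterate k] at hk
        exact i.2 hk
      rw [if_neg hGood, zero_mul]
  rw [Finset.sum_congr rfl (fun p _ => step3 p), Finset.sum_filter]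
  apply Finset.sum_congr rfl
  intro p _
  by_cases h : ∀ x : V, ∃ k, (extU U p)^[k] x ∈ U
  · rw [if_pos h, if_pos h, one_mul]
  · rw [if_neg h, if_neg h, zero_mul]

lemma extU_of_fix {f : V → V} (hf : ∀ i ∈ U, f i = i) :
    extU U (fun i : {i : V // i ∉ U} => f ↑i) = f := by
  funext x
  by_cases h : x ∈ U
  · rw [extU_mem h, hf x h]
  · rw [extU_not_mem h]

end AMTT

/-- **All Minors Matrix Tree Theorem, principal case.** For the Laplacian `A` of a weighted
complete directed graph on `{0, …, n}` and a set `U` of nodes, the determinant of `A` with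
the rows and columns indexed by `U` deleted equals the sum over all spanning forests rooted
exactly at `U` of the products of their edge weights. -/
theorem all_minors_matrix_tree_principal {R : Type*} [CommRing R] {n : ℕ}
    (a : Fin (n + 1) → Fin (n + 1) → R) (U : Finset (Fin (n + 1))) :
    ((laplacian a).submatrix (fun i : {i // i ∉ U} => (i : Fin (n + 1)))
        (fun j : {j // j ∉ U} => (j : Fin (n + 1)))).det =
      ∑ f ∈ Finset.univ.filter
          (fun f : Fin (n + 1) → Fin (n + 1) => IsForest {i | i ∈ U} f),
        ∏ i ∈ Finset.univ.filter (fun i => i ∉ U), a i (f i) := by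
  classical
  have h1 : ((laplacian a).submatrix (fun i : {i // i ∉ U} => (i : Fin (n + 1)))
      (fun j : {j // j ∉ U} => (j : Fin (n + 1)))) =
      Matrix.of fun i j : {i : Fin (n+1) // i ∉ U} =>
        if (i : Fin (n+1)) = ↑j then
          ∑ k ∈ Finset.univ.filter (fun k => k ≠ (i : Fin (n+1))), a ↑i k
        else - a ↑i ↑j := by
    ext i j
    simp only [Matrix.submatrix_apply, laplacian, Matrix.of_apply]
  rw [h1, AMTT.det_eq_sum a U]
  apply Finset.sum_nbij' (fun p => AMTT.extU U p)
    (fun f => fun i : {i : Fin (n+1) // i ∉ U} => f ↑i)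
  · intro p hp
    simp only [Finset.mem_filter] at hp ⊢
    refine ⟨Finset.mem_univ _, fun x hx => AMTT.extU_mem hx, fun x => hp.2 x⟩
  · intro f hf
    simp only [Finset.mem_filter] at hf ⊢
    obtain ⟨hfix, hreach⟩ := hf.2
    refine ⟨Finset.mem_univ _, fun x => ?_⟩
    rw [AMTT.extU_of_fix hfix]
    exact hreach x
  · intro p hp
    funext i
    exact AMTT.extU_coe i
  · intro f hf
    simp only [Finset.mem_filter] at hf
    exact AMTT.extU_of_fix hf.2.1
  · intro p hp
    rw [Finset.prod_subtype (p := fun i => i ∉ U) (Finset.univ.filter fun i => i ∉ U) (by simp)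
      (fun i => a i (AMTT.extU U p i))]
    apply Finset.prod_congr rfl
    intro i _
    rw [AMTT.extU_coe]
end
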